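/- Let f : [a,b] → ℝ be Lipschitz and let s : [a,b] → ℝ be the lower convex envelope of f, i.e. the supremum of all convex functions below f, and assume s(a) = f(a) and s(b) = f(b). Then ∫_a^b s′(t)² dt ≤ ∫_a^b f′(t)² dt. -/

import Mathlib

open Set MeasureTheory intervalIntegral Filter Topology

lemma lip_abs_deriv_le {L : NNReal} {F : ℝ → ℝ} (hF : LipschitzWith L F) (t : ℝ) :
    |deriv F t| ≤ L := by
  by_cases h : DifferentiableAt ℝ F t
  · have hd := h.hasDerivAt
    rw [hasDerivAt_iff_tendsto_slope] at hd
    have hb : ∀ᶠ u in 𝓝[≠] t, |slope F t u| ≤ (L : ℝ) := by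
      filter_upwards [self_mem_nhdsWithin] with u hu
      have : dist (F t) (F u) ≤ L * dist t u := hF.dist_le_mul t u
      rw [slope_def_field, div_eq_inv_mul, abs_mul, abs_inv]
      rw [Real.dist_eq, Real.dist_eq] at this
      rcases eq_or_ne u t with rfl | hut
      · simp at hu
      · have h1 : |u - t| > 0 := abs_pos.2 (sub_ne_zero.2 hut)
        rw [inv_mul_le_iff₀ h1, mul_comm]
        calc |F u - F t| = |F t - F u| := abs_sub_comm _ _
          _ ≤ L * |t - u| := this
          _ = L * |u - t| := by rw [abs_sub_comm]
    exact le_of_tendsto (hd.abs) hb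
  · simp [deriv_zero_of_not_differentiableAt h]

lemma avg_tendsto {F : ℝ → ℝ} (hcont : Continuous F) (c : ℝ) :
    Tendsto (fun n : ℕ => (∫ x in c..(c + ((n : ℝ) + 1)⁻¹), F x) * ((n : ℝ) + 1))
      atTop (𝓝 (F c)) := by
  have hG : HasDerivAt (fun u => ∫ x in c..u, F x) (F c) c :=
    intervalIntegral.integral_hasDerivAt_right (hcont.intervalIntegrable _ _)
      (hcont.stronglyMeasurableAtFilter _ _) hcont.continuousAt
  rw [hasDerivAt_iff_tendsto_slope] at hG
  have hseq : Tendsto (fun n : ℕ => c + ((n : ℝ) + 1)⁻¹) atTop (𝓝[≠] c) := by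
    apply tendsto_nhdsWithin_of_tendsto_nhds_of_eventually_within
    · have : Tendsto (fun n : ℕ => ((n : ℝ) + 1)⁻¹) atTop (𝓝 0) :=
        tendsto_one_div_add_atTop_nhds_zero_nat.congr (by simp [one_div])
      simpa using (tendsto_const_nhds (x := c)).add this
    · filter_upwards [] with n
      have : (0:ℝ) < ((n : ℝ) + 1)⁻¹ := by positivity
      simp only [Set.mem_compl_iff, Set.mem_singleton_iff]
      intro h
      nlinarith [this]
  have := hG.comp hseq
  refine this.congr fun n => ?_
  have hpos : (0:ℝ) < ((n : ℝ) + 1)⁻¹ := by positivity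
  simp only [Function.comp, slope_def_field, intervalIntegral.integral_same, sub_zero,
    add_sub_cancel_left, div_inv_eq_mul]

lemma lip_ftc {L : NNReal} {F : ℝ → ℝ} (hF : LipschitzWith L F) {α β : ℝ} (hab : α ≤ β) :
    ∫ t in α..β, deriv F t = F β - F α := by
  have hcont : Continuous F := hF.continuous
  set h : ℕ → ℝ := fun n => ((n : ℝ) + 1)⁻¹ with hh
  have hpos : ∀ n, (0:ℝ) < h n := fun n => by positivity
  set Q : ℕ → ℝ → ℝ := fun n t => (F (t + h n) - F t) * ((n : ℝ) + 1) with hQ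
  -- Step 1 : the integral of Q n
  have step1 : ∀ n, ∫ t in α..β, Q n t =
      (∫ x in β..(β + h n), F x) * ((n : ℝ) + 1) - (∫ x in α..(α + h n), F x) * ((n : ℝ) + 1) := by
    intro n
    have i1 : IntervalIntegrable (fun t => F (t + h n)) volume α β :=
      (hcont.comp (continuous_id.add continuous_const)).intervalIntegrable _ _
    have i2 : IntervalIntegrable F volume α β := hcont.intervalIntegrable _ _
    have e1 : ∫ t in α..β, Q n t
        = (∫ t in α..β, (F (t + h n) - F t)) * ((n : ℝ) + 1) := by
      rw [← intervalIntegral.integral_mul_const]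
    rw [e1, intervalIntegral.integral_sub i1 i2, intervalIntegral.integral_comp_add_right]
    have a1 : IntervalIntegrable F volume α (α + h n) := hcont.intervalIntegrable _ _
    have a2 : IntervalIntegrable F volume (α + h n) (β + h n) := hcont.intervalIntegrable _ _
    have a3 : IntervalIntegrable F volume α β := i2
    have a4 : IntervalIntegrable F volume β (β + h n) := hcont.intervalIntegrable _ _
    have key : (∫ x in (α + h n)..(β + h n), F x) - ∫ x in α..β, F x
        = (∫ x in β..(β + h n), F x) - ∫ x in α..(α + h n), F x := by
      have c1 : (∫ x in α..(α + h n), F x) + ∫ x in (α + h n)..(β + h n), F x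
          = ∫ x in α..(β + h n), F x := intervalIntegral.integral_add_adjacent_intervals a1 a2
      have c2 : (∫ x in α..β, F x) + ∫ x in β..(β + h n), F x
          = ∫ x in α..(β + h n), F x := intervalIntegral.integral_add_adjacent_intervals a3 a4
      linarith
    rw [key]
    ring
  -- Step 2 : the limit of the right side
  have step2 : Tendsto (fun n => ∫ t in α..β, Q n t) atTop (𝓝 (F β - F α)) := by
    have := (avg_tendsto hcont β).sub (avg_tendsto hcont α)
    refine this.congr fun n => (step1 n).symm
  -- Step 3 : dominated convergence
  have step3 : Tendsto (fun n => ∫ t in α..β, Q n t) atTop (𝓝 (∫ t in α..β, deriv F t)) := by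
    rw [intervalIntegral.integral_of_le hab]
    have : ∀ n, ∫ t in α..β, Q n t = ∫ t in Set.Ioc α β, Q n t := fun n =>
      intervalIntegral.integral_of_le hab
    simp only [this]
    apply MeasureTheory.tendsto_integral_of_dominated_convergence (fun _ => (L : ℝ))
    · intro n
      exact ((hcont.comp (continuous_id.add continuous_const)).sub hcont).mul
        continuous_const |>.aestronglyMeasurable
    · exact integrable_const _
    · intro n
      filter_upwards [] with t
      have : dist (F (t + h n)) (F t) ≤ L * dist (t + h n) t := hF.dist_le_mul _ _
      rw [Real.dist_eq, Real.dist_eq] at this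
      simp only [add_sub_cancel_left, abs_of_pos (hpos n)] at this
      rw [hQ]
      simp only [Real.norm_eq_abs, abs_mul]
      have hn : |(n:ℝ) + 1| = (n:ℝ) + 1 := abs_of_pos (by positivity)
      rw [hn]
      calc |F (t + h n) - F t| * ((n:ℝ) + 1) ≤ (L * h n) * ((n:ℝ) + 1) := by
            apply mul_le_mul_of_nonneg_right this (by positivity)
        _ = L := by rw [hh]; field_simp
    · have hae : ∀ᵐ t ∂(volume.restrict (Set.Ioc α β)), DifferentiableAt ℝ F t :=
        MeasureTheory.ae_restrict_of_ae hF.ae_differentiableAt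
      filter_upwards [hae] with t ht
      have hd := ht.hasDerivAt
      rw [hasDerivAt_iff_tendsto_slope] at hd
      have hseq : Tendsto (fun n : ℕ => t + h n) atTop (𝓝[≠] t) := by
        apply tendsto_nhdsWithin_of_tendsto_nhds_of_eventually_within
        · have : Tendsto (fun n : ℕ => h n) atTop (𝓝 0) :=
            tendsto_one_div_add_atTop_nhds_zero_nat.congr (by simp [hh, one_div])
          simpa using (tendsto_const_nhds (x := t)).add this
        · filter_upwards [] with n
          simp only [Set.mem_compl_iff, Set.mem_singleton_iff]
          intro hcontr
          nlinarith [hpos n]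
      have := hd.comp hseq
      refine this.congr fun n => ?_
      simp only [Function.comp, slope_def_field, add_sub_cancel_left, hQ, hh]
      rw [div_eq_mul_inv, inv_inv]
  exact tendsto_nhds_unique step3 step2

section Envelope

variable {a b : ℝ} {f s : ℝ → ℝ} {L : NNReal}

/-- the family of convex minorants -/
def EnvSet (a b : ℝ) (f : ℝ → ℝ) (t : ℝ) : Set ℝ :=
  {y : ℝ | ∃ g : ℝ → ℝ, ConvexOn ℝ (Set.Icc a b) g ∧
    (∀ u ∈ Set.Icc a b, g u ≤ f u) ∧ y = g t}

lemma affine_convexOn (S : Set ℝ) (hS : Convex ℝ S) (c d : ℝ) :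
    ConvexOn ℝ S (fun u => c * u + d) := by
  refine ⟨hS, fun x _ y _ p q hp hq hpq => le_of_eq ?_⟩
  simp only [smul_eq_mul]
  have : c * (p * x + q * y) + (p + q) * d = p * (c * x + d) + q * (c * y + d) := by ring
  rw [hpq, one_mul] at this
  linarith [this]

lemma g0_mem (hab : a < b) (hf : LipschitzOnWith L f (Set.Icc a b)) :
    ConvexOn ℝ (Set.Icc a b) (fun u => max (f a - L * (u - a)) (f b - L * (b - u))) ∧
    ∀ u ∈ Set.Icc a b, max (f a - L * (u - a)) (f b - L * (b - u)) ≤ f u := by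
  constructor
  · have h1 : ConvexOn ℝ (Set.Icc a b) (fun u => -(L:ℝ) * u + (f a + L * a)) :=
      affine_convexOn _ (convex_Icc a b) _ _
    have h2 : ConvexOn ℝ (Set.Icc a b) (fun u => (L:ℝ) * u + (f b - L * b)) :=
      affine_convexOn _ (convex_Icc a b) _ _
    have := h1.sup h2
    convert this using 2 with u
    · exact rfl
    · exact rfl
    simp only [Pi.sup_apply, Pi.sup_def]
    congr 1 <;> ring
  · intro u hu
    have ha : a ∈ Set.Icc a b := Set.left_mem_Icc.2 hab.le
    have hb : b ∈ Set.Icc a b := Set.right_mem_Icc.2 hab.le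
    have d1 : dist (f u) (f a) ≤ L * dist u a := hf.dist_le_mul u hu a ha
    have d2 : dist (f u) (f b) ≤ L * dist u b := hf.dist_le_mul u hu b hb
    rw [Real.dist_eq, Real.dist_eq] at d1 d2
    rw [abs_of_nonneg (by linarith [hu.1] : (0:ℝ) ≤ u - a)] at d1
    rw [abs_of_nonpos (by linarith [hu.2] : u - b ≤ (0:ℝ))] at d2
    have h1 := (abs_le.1 d1).1
    have h2 := (abs_le.1 d2).1
    apply max_le <;> linarith
  
lemma env_nonempty_bdd (hab : a < b) (hf : LipschitzOnWith L f (Set.Icc a b)) (t : ℝ)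
    (ht : t ∈ Set.Icc a b) :
    (EnvSet a b f t).Nonempty ∧ BddAbove (EnvSet a b f t) := by
  obtain ⟨hconv, hle⟩ := g0_mem hab hf
  constructor
  · exact ⟨_, _, hconv, hle, rfl⟩
  · exact ⟨f t, by rintro y ⟨g, hg, hgle, rfl⟩; exact hgle t ht⟩

end Envelope

section Envelope2
variable {a b : ℝ} {f s : ℝ → ℝ} {L : NNReal}

lemma env_le_f (hab : a < b) (hf : LipschitzOnWith L f (Set.Icc a b))
    (hs : ∀ t ∈ Set.Icc a b, s t = sSup (EnvSet a b f t)) :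
    ∀ t ∈ Set.Icc a b, s t ≤ f t := by
  intro t ht
  rw [hs t ht]
  exact csSup_le (env_nonempty_bdd hab hf t ht).1
    (by rintro y ⟨g, hg, hgle, rfl⟩; exact hgle t ht)

lemma minor_le_env (hab : a < b) (hf : LipschitzOnWith L f (Set.Icc a b))
    (hs : ∀ t ∈ Set.Icc a b, s t = sSup (EnvSet a b f t))
    {g : ℝ → ℝ} (hg : ConvexOn ℝ (Set.Icc a b) g) (hgle : ∀ u ∈ Set.Icc a b, g u ≤ f u) :
    ∀ t ∈ Set.Icc a b, g t ≤ s t := by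
  intro t ht
  rw [hs t ht]
  exact le_csSup (env_nonempty_bdd hab hf t ht).2 ⟨g, hg, hgle, rfl⟩

lemma g0_le_env (hab : a < b) (hf : LipschitzOnWith L f (Set.Icc a b))
    (hs : ∀ t ∈ Set.Icc a b, s t = sSup (EnvSet a b f t)) :
    ∀ t ∈ Set.Icc a b, max (f a - L * (t - a)) (f b - L * (b - t)) ≤ s t := by
  obtain ⟨hconv, hle⟩ := g0_mem (f := f) hab hf
  exact minor_le_env hab hf hs hconv hle

lemma env_convex (hab : a < b) (hf : LipschitzOnWith L f (Set.Icc a b))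
    (hs : ∀ t ∈ Set.Icc a b, s t = sSup (EnvSet a b f t)) :
    ConvexOn ℝ (Set.Icc a b) s := by
  refine ⟨convex_Icc a b, fun x hx y hy p q hp hq hpq => ?_⟩
  have hmem : p • x + q • y ∈ Set.Icc a b := (convex_Icc a b) hx hy hp hq hpq
  rw [hs _ hmem]
  apply csSup_le (env_nonempty_bdd hab hf _ hmem).1
  rintro z ⟨g, hg, hgle, rfl⟩
  calc g (p • x + q • y) ≤ p * g x + q * g y := hg.2 hx hy hp hq hpq
    _ ≤ p * s x + q * s y := by
        have h1 := minor_le_env hab hf hs hg hgle x hx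
        have h2 := minor_le_env hab hf hs hg hgle y hy
        have m1 := mul_le_mul_of_nonneg_left h1 hp
        have m2 := mul_le_mul_of_nonneg_left h2 hq
        nlinarith

lemma env_lipschitz (hab : a < b) (hf : LipschitzOnWith L f (Set.Icc a b))
    (hs : ∀ t ∈ Set.Icc a b, s t = sSup (EnvSet a b f t))
    (hsa : s a = f a) (hsb : s b = f b) :
    LipschitzOnWith L s (Set.Icc a b) := by
  have hconv := env_convex hab hf hs
  have hg0 := g0_le_env hab hf hs
  have hub : ∀ x ∈ Set.Icc a b, ∀ y ∈ Set.Icc a b, x < y → s y - s x ≤ L * (y - x) := by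
    intro x hx y hy hxy
    -- slope (x,y) ≤ slope (x,b) or y = b
    have key : (s y - s x) / (y - x) ≤ (f b - s x) / (b - x) := by
      rcases eq_or_lt_of_le hy.2 with rfl | hyb
      · rw [hsb]
      · have := hconv.secant_mono_aux2 hx (Set.right_mem_Icc.2 hab.le) hxy hyb
        rw [hsb] at this; exact this
    have hg0x : f b - L * (b - x) ≤ s x := le_trans (le_max_right _ _) (hg0 x hx)
    have hbx : (0:ℝ) < b - x := by have := hy.2; linarith
    have hxy' : (0:ℝ) < y - x := by linarith
    have : (f b - s x) / (b - x) ≤ L := by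
      rw [div_le_iff₀ hbx]; linarith
    have h2 : (s y - s x) / (y - x) ≤ L := key.trans this
    rw [div_le_iff₀ hxy'] at h2; linarith
  have hlb : ∀ x ∈ Set.Icc a b, ∀ y ∈ Set.Icc a b, x < y → -(L * (y - x)) ≤ s y - s x := by
    intro x hx y hy hxy
    have key : (f a - s y) / (a - y) ≤ (s x - s y) / (x - y) := by
      rcases eq_or_lt_of_le hx.1 with rfl | hax
      · rw [hsa]
      · have := hconv.secant_mono (a := y) hy (Set.left_mem_Icc.2 hab.le) hx
          (by intro h; exact absurd h (by linarith)) (by intro h; exact absurd h (by linarith))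
          hax.le
        rw [hsa] at this; exact this
    have hg0y : f a - L * (y - a) ≤ s y := le_trans (le_max_left _ _) (hg0 y hy)
    have hay : (0:ℝ) < y - a := by have := hx.1; linarith
    have hxy' : (0:ℝ) < y - x := by linarith
    have h1 : -(L:ℝ) ≤ (f a - s y) / (a - y) := by
      rw [le_div_iff_of_neg (by linarith : a - y < 0)]
      nlinarith
    have h2 : -(L:ℝ) ≤ (s x - s y) / (x - y) := h1.trans key
    rw [le_div_iff_of_neg (by linarith : x - y < 0)] at h2
    nlinarith
  apply LipschitzOnWith.of_dist_le_mul
  intro x hx y hy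
  rw [Real.dist_eq, Real.dist_eq]
  rcases lt_trichotomy x y with h | rfl | h
  · rw [abs_sub_comm (s x), abs_sub_comm x, abs_of_pos (show (0:ℝ) < y - x by linarith), abs_le]
    refine ⟨?_, ?_⟩
    · have := hlb x hx y hy h; linarith
    · exact hub x hx y hy h
  · simp
  · rw [abs_of_pos (show (0:ℝ) < x - y by linarith), abs_le]
    refine ⟨?_, ?_⟩
    · have := hlb y hy x hx h; linarith
    · exact hub y hy x hx h

end Envelope2

section Envelope3
variable {a b : ℝ} {f s : ℝ → ℝ} {L : NNReal}

lemma env_locally_affine (hab : a < b) (hf : LipschitzOnWith L f (Set.Icc a b))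
    (hs : ∀ t ∈ Set.Icc a b, s t = sSup (EnvSet a b f t))
    (hsa : s a = f a) (hsb : s b = f b)
    {t₀ : ℝ} (ht₀ : t₀ ∈ Set.Ioo a b) (hlt : s t₀ < f t₀) :
    ∃ δ > 0, Set.Icc (t₀ - δ) (t₀ + δ) ⊆ Set.Ioo a b ∧
      ∃ c d : ℝ, ∀ u ∈ Set.Icc (t₀ - δ) (t₀ + δ), s u = c * u + d := by
  have hconv := env_convex hab hf hs
  have hsLip := env_lipschitz hab hf hs hsa hsb
  have hsf := env_le_f hab hf hs
  have hL0 : (0:ℝ) ≤ L := NNReal.coe_nonneg L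
  set ε : ℝ := (f t₀ - s t₀) / 2 with hε
  have hεpos : 0 < ε := by rw [hε]; linarith
  set δ : ℝ := min (min ((t₀ - a) / 2) ((b - t₀) / 2)) (ε / (4 * L + 1)) with hδ
  have hδpos : 0 < δ := by
    apply lt_min (lt_min (by linarith [ht₀.1]) (by linarith [ht₀.2]))
    positivity
  have hδa : δ ≤ (t₀ - a) / 2 := le_trans (min_le_left _ _) (min_le_left _ _)
  have hδb : δ ≤ (b - t₀) / 2 := le_trans (min_le_left _ _) (min_le_right _ _)
  have hδε : 4 * L * δ ≤ ε := by
    have h1 : δ ≤ ε / (4 * L + 1) := min_le_right _ _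
    have h2 : (0:ℝ) < 4 * L + 1 := by positivity
    rw [le_div_iff₀ h2] at h1
    nlinarith [h1, hδpos]
  have hsub : Set.Icc (t₀ - δ) (t₀ + δ) ⊆ Set.Ioo a b := by
    intro u hu
    exact ⟨by linarith [hu.1, ht₀.1], by linarith [hu.2, ht₀.2]⟩
  have hsubI : Set.Icc (t₀ - δ) (t₀ + δ) ⊆ Set.Icc a b :=
    hsub.trans Set.Ioo_subset_Icc_self
  have ht₀I : t₀ ∈ Set.Icc a b := Set.Ioo_subset_Icc_self ht₀
  have hgap : ∀ u ∈ Set.Icc (t₀ - δ) (t₀ + δ), ε ≤ f u - s u := by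
    intro u hu
    have huI : u ∈ Set.Icc a b := hsubI hu
    have hd : |u - t₀| ≤ δ := by
      rw [abs_le]; exact ⟨by linarith [hu.1], by linarith [hu.2]⟩
    have d1 : |f u - f t₀| ≤ L * δ := by
      have := hf.dist_le_mul u huI t₀ ht₀I
      rw [Real.dist_eq, Real.dist_eq] at this
      exact this.trans (mul_le_mul_of_nonneg_left hd hL0)
    have d2 : |s u - s t₀| ≤ L * δ := by
      have := hsLip.dist_le_mul u huI t₀ ht₀I
      rw [Real.dist_eq, Real.dist_eq] at this
      exact this.trans (mul_le_mul_of_nonneg_left hd hL0)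
    have e1 := (abs_le.1 d1).1
    have e2 := (abs_le.1 d2).2
    have h3 : 2 * (L * δ) ≤ ε := by nlinarith [hδε]
    rw [hε] at *
    linarith
  set x₁ : ℝ := t₀ - δ with hx₁
  set x₂ : ℝ := t₀ + δ with hx₂
  have hx12 : x₁ < x₂ := by rw [hx₁, hx₂]; linarith
  have hne : x₂ - x₁ ≠ 0 := ne_of_gt (by linarith)
  have hx1I : x₁ ∈ Set.Icc a b := hsubI ⟨le_refl _, by linarith⟩
  have hx2I : x₂ ∈ Set.Icc a b := hsubI ⟨by linarith, le_refl _⟩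
  set c : ℝ := (s x₂ - s x₁) / (x₂ - x₁) with hc
  have hcmul : c * (x₂ - x₁) = s x₂ - s x₁ := by
    rw [hc, div_mul_cancel₀ _ hne]
  set ℓ : ℝ → ℝ := fun u => c * u + (s x₁ - c * x₁) with hℓ
  have hℓeq : ∀ u, ℓ u = s x₁ + c * (u - x₁) := by intro u; rw [hℓ]; ring
  have hℓx₁ : ℓ x₁ = s x₁ := by rw [hℓeq]; ring
  have hℓx₂ : ℓ x₂ = s x₂ := by rw [hℓeq]; linarith [hcmul]
  have hcabs : |c| ≤ L := by
    rw [hc, abs_div, abs_of_pos (by linarith : (0:ℝ) < x₂ - x₁), div_le_iff₀ (by linarith)]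
    have := hsLip.dist_le_mul x₂ hx2I x₁ hx1I
    rw [Real.dist_eq, Real.dist_eq] at this
    exact this.trans (by rw [abs_of_pos (by linarith : (0:ℝ) < x₂ - x₁)])
  have hout : ∀ u ∈ Set.Icc a b, (u < x₁ ∨ x₂ < u) → ℓ u ≤ s u := by
    rintro u huI (h | h)
    · have key := hconv.slope_mono_adjacent huI hx2I h hx12
      rw [← hc] at key
      have h1 : (0:ℝ) < x₁ - u := by linarith
      rw [div_le_iff₀ h1] at key
      rw [hℓeq]
      have e : c * (u - x₁) = -(c * (x₁ - u)) := by ring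
      linarith [key, e]
    · have key := hconv.slope_mono_adjacent hx1I huI hx12 h
      rw [← hc] at key
      have h1 : (0:ℝ) < u - x₂ := by linarith
      rw [le_div_iff₀ h1] at key
      have e : ℓ u = s x₂ + c * (u - x₂) := by
        rw [hℓeq]; linarith [hcmul,
          show c * (u - x₁) = c * (x₂ - x₁) + c * (u - x₂) by ring]
      rw [e]; linarith [key]
  have hin : ∀ u ∈ Set.Icc x₁ x₂, ℓ u ≤ s u + 4 * L * δ := by
    intro u hu
    have huI : u ∈ Set.Icc a b := hsubI hu
    have hd : |x₁ - u| ≤ 2 * δ := by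
      rw [abs_le]
      refine ⟨?_, ?_⟩
      · have := hu.2; rw [hx₂] at this; rw [hx₁]; linarith
      · have := hu.1; rw [hx₁] at this ⊢; linarith
    have d2 : |s x₁ - s u| ≤ L * (2 * δ) := by
      have := hsLip.dist_le_mul x₁ hx1I u huI
      rw [Real.dist_eq, Real.dist_eq] at this
      exact this.trans (mul_le_mul_of_nonneg_left hd hL0)
    have e2 := (abs_le.1 d2).2
    have h1 : |c * (u - x₁)| ≤ L * (2 * δ) := by
      rw [abs_mul]
      exact mul_le_mul hcabs (by rw [abs_sub_comm]; exact hd) (abs_nonneg _) hL0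
    have hcu : c * (u - x₁) ≤ L * (2 * δ) := (le_abs_self _).trans h1
    rw [hℓeq]
    linarith [e2, hcu]
  set g : ℝ → ℝ := fun u => max (s u) (ℓ u) with hg
  have hgconv : ConvexOn ℝ (Set.Icc a b) g := by
    have h2 : ConvexOn ℝ (Set.Icc a b) ℓ := by
      have := affine_convexOn (Set.Icc a b) (convex_Icc a b) c (s x₁ - c * x₁)
      convert this using 1
    have := hconv.sup h2
    convert this using 1
    · exact rfl
    · exact rfl
    exact rfl
  have hgle : ∀ u ∈ Set.Icc a b, g u ≤ f u := by
    intro u huI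
    rw [hg]
    apply max_le (hsf u huI)
    by_cases hcase : u ∈ Set.Icc x₁ x₂
    · have h1 := hin u hcase
      have h2 := hgap u hcase
      linarith [hδε]
    · rw [Set.mem_Icc, not_and_or, not_le, not_le] at hcase
      rcases hcase with h | h
      · exact (hout u huI (Or.inl h)).trans (hsf u huI)
      · exact (hout u huI (Or.inr h)).trans (hsf u huI)
  have hgs := minor_le_env hab hf hs hgconv hgle
  refine ⟨δ, hδpos, hsub, c, s x₁ - c * x₁, ?_⟩
  intro u hu
  have huI : u ∈ Set.Icc a b := hsubI hu
  have h1 : ℓ u ≤ s u := le_trans (le_max_right _ _) (hgs u huI)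
  have h2 : s u ≤ ℓ u := by
    rcases eq_or_lt_of_le hu.1 with heq | hlo
    · rw [← heq, ← hx₁] at *; rw [hℓx₁]
    · rcases eq_or_lt_of_le hu.2 with heq | hhi
      · rw [heq, ← hx₂] at *; rw [hℓx₂]
      · have hlo' : x₁ < u := hlo
        have hhi' : u < x₂ := hhi
        have key := hconv.secant_mono_aux1 hx1I hx2I hlo' hhi'
        have hden : (0:ℝ) < x₂ - x₁ := by linarith
        have hℓu : ℓ u * (x₂ - x₁) = (x₂ - u) * s x₁ + (u - x₁) * s x₂ := by
          have h0 := hℓeq u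
          linear_combination (x₂ - x₁) * h0 + (u - x₁) * hcmul
        have : s u * (x₂ - x₁) ≤ ℓ u * (x₂ - x₁) := by
          rw [hℓu]; linarith [key]
        exact le_of_mul_le_mul_right this hden
  have heq : s u = ℓ u := le_antisymm h2 h1
  rw [heq, hℓ]
end Envelope3

section MainEnergy
variable {L : NNReal} {F S : ℝ → ℝ} {a b : ℝ}

lemma sq_deriv_integrableOn (hF : LipschitzWith L F) {A : Set ℝ}
    (hA : MeasurableSet A) (hfin : volume A < ⊤) :
    IntegrableOn (fun t => (deriv F t)^2) A := by
  have hm : Measurable fun t => (deriv F t)^2 := (measurable_deriv F).pow_const 2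
  refine Integrable.mono' (g := fun _ => (L:ℝ)^2) (integrableOn_const hfin.ne)
    hm.aestronglyMeasurable ?_
  filter_upwards [] with t
  rw [Real.norm_eq_abs, abs_pow]
  exact pow_le_pow_left₀ (abs_nonneg _) (lip_abs_deriv_le hF t) 2

lemma deriv_integrableOn (hF : LipschitzWith L F) {A : Set ℝ}
    (hA : MeasurableSet A) (hfin : volume A < ⊤) :
    IntegrableOn (fun t => deriv F t) A := by
  refine Integrable.mono' (g := fun _ => (L:ℝ)) (integrableOn_const hfin.ne)
    (measurable_deriv F).aestronglyMeasurable ?_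
  filter_upwards [] with t
  rw [Real.norm_eq_abs]
  exact lip_abs_deriv_le hF t

lemma main_energy (hab : a < b)
    (hF : LipschitzWith L F) (hS : LipschitzWith L S)
    (hle : ∀ t ∈ Set.Icc a b, S t ≤ F t)
    (hea : S a = F a) (heb : S b = F b)
    (haff : ∀ t ∈ Set.Ioo a b, S t < F t →
      ∃ δ > 0, Set.Icc (t - δ) (t + δ) ⊆ Set.Ioo a b ∧
        ∃ c d : ℝ, ∀ u ∈ Set.Icc (t - δ) (t + δ), S u = c * u + d) :
    ∫ t in Set.Ioo a b, (deriv S t)^2 ≤ ∫ t in Set.Ioo a b, (deriv F t)^2 := by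
  classical
  set U : Set ℝ := {t | t ∈ Set.Ioo a b ∧ S t < F t} with hUdef
  have hUsub : U ⊆ Set.Ioo a b := fun t ht => ht.1
  have hUopen : IsOpen U := by
    have : U = Set.Ioo a b ∩ {t | S t < F t} := by
      ext t; simp [hUdef, Set.mem_setOf_eq]
    rw [this]
    exact isOpen_Ioo.inter (isOpen_lt hS.continuous hF.continuous)
  have hUmeas : MeasurableSet U := hUopen.measurableSet
  have hUfin : volume U < ⊤ :=
    lt_of_le_of_lt (measure_mono hUsub) measure_Ioo_lt_top
  -- local constancy of deriv S on U
  have hloc : ∀ u ∈ U, ∃ δ > 0, ∃ c : ℝ, ∀ v ∈ Set.Ioo (u - δ) (u + δ), HasDerivAt S c v := by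
    intro u hu
    obtain ⟨δ, hδ, hsub, c, d, haf⟩ := haff u hu.1 hu.2
    refine ⟨δ, hδ, c, fun v hv => ?_⟩
    have hmem : Set.Icc (u - δ) (u + δ) ∈ 𝓝 v := Icc_mem_nhds hv.1 hv.2
    have hev : (fun w => c * w + d) =ᶠ[𝓝 v] S := by
      filter_upwards [hmem] with w hw using (haf w hw).symm
    have hder : HasDerivAt (fun w => c * w + d) c v := by
      simpa using ((hasDerivAt_id v).const_mul c).add_const d
    exact hder.congr_of_eventuallyEq hev.symm
  -- contact points
  have hcontact : ∀ x, a ≤ x → x ≤ b → x ∉ U → S x = F x := by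
    intro x hax hxb hxU
    rcases eq_or_lt_of_le hax with rfl | hax'
    · exact hea
    rcases eq_or_lt_of_le hxb with rfl | hxb'
    · exact heb
    have hxI : x ∈ Set.Ioo a b := ⟨hax', hxb'⟩
    have : ¬ S x < F x := fun h => hxU ⟨hxI, h⟩
    exact le_antisymm (hle x (Set.Ioo_subset_Icc_self hxI)) (not_lt.1 this)
  -- component intervals
  have hcomp : ∀ t ∈ U, ∃ α β : ℝ, a ≤ α ∧ α < t ∧ t < β ∧ β ≤ b ∧ α ∉ U ∧ β ∉ U ∧
      Set.Ioo α β ⊆ U := by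
    intro t ht
    have htI := hUsub ht
    set A : Set ℝ := Uᶜ ∩ Set.Iio t with hA
    have haA : a ∈ A := ⟨fun h => (lt_irrefl a (hUsub h).1), htI.1⟩
    have hAne : A.Nonempty := ⟨a, haA⟩
    have hAbdd : BddAbove A := ⟨t, fun x hx => le_of_lt hx.2⟩
    set α : ℝ := sSup A with hα
    have hαt : α ≤ t := csSup_le hAne fun x hx => le_of_lt hx.2
    have hαU : α ∉ U := by
      have h1 : α ∈ closure A := csSup_mem_closure hAne hAbdd
      have h2 : closure A ⊆ Uᶜ := by
        apply IsClosed.closure_subset_iff (hUopen.isClosed_compl) |>.2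
        exact fun x hx => hx.1
      exact h2 h1
    have hαt' : α < t := lt_of_le_of_ne hαt (fun h => hαU (h ▸ ht))
    have haα : a ≤ α := le_csSup hAbdd haA
    have hIooU : Set.Ioo α t ⊆ U := by
      intro x hx
      by_contra hxU
      have : x ∈ A := ⟨hxU, hx.2⟩
      exact absurd (le_csSup hAbdd this) (not_le.2 hx.1)
    set B : Set ℝ := Uᶜ ∩ Set.Ioi t with hB
    have hbB : b ∈ B := ⟨fun h => (lt_irrefl b (hUsub h).2), htI.2⟩
    have hBne : B.Nonempty := ⟨b, hbB⟩
    have hBbdd : BddBelow B := ⟨t, fun x hx => le_of_lt hx.2⟩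
    set β : ℝ := sInf B with hβ
    have hβt : t ≤ β := le_csInf hBne fun x hx => le_of_lt hx.2
    have hβU : β ∉ U := by
      have h1 : β ∈ closure B := csInf_mem_closure hBne hBbdd
      have h2 : closure B ⊆ Uᶜ := by
        apply IsClosed.closure_subset_iff (hUopen.isClosed_compl) |>.2
        exact fun x hx => hx.1
      exact h2 h1
    have hβt' : t < β := lt_of_le_of_ne hβt (fun h => hβU (h ▸ ht))
    have hβb : β ≤ b := csInf_le hBbdd hbB
    have hIooU2 : Set.Ioo t β ⊆ U := by
      intro x hx
      by_contra hxU
      have : x ∈ B := ⟨hxU, hx.1⟩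
      exact absurd (csInf_le hBbdd this) (not_le.2 hx.2)
    refine ⟨α, β, haα, hαt', hβt', hβb, hαU, hβU, ?_⟩
    intro x hx
    rcases lt_trichotomy x t with h | rfl | h
    · exact hIooU ⟨hx.1, h⟩
    · exact ht
    · exact hIooU2 ⟨h, hx.2⟩
  -- the set of components
  set P : Set (ℝ × ℝ) := {p | a ≤ p.1 ∧ p.2 ≤ b ∧ p.1 < p.2 ∧ p.1 ∉ U ∧ p.2 ∉ U ∧
      Set.Ioo p.1 p.2 ⊆ U} with hP
  have key1 : ∀ r w : ℝ × ℝ, r ∈ P → w ∈ P → ∀ x, x ∈ Set.Ioo r.1 r.2 →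
      x ∈ Set.Ioo w.1 w.2 → w.1 ≤ r.1 := by
    intro r w hr hw x hxr hxw
    by_contra hlt
    push_neg at hlt
    have hnot : w.1 ∉ Set.Ioo r.1 r.2 := fun hmem => hw.2.2.2.1 (hr.2.2.2.2.2 hmem)
    rw [Set.mem_Ioo, not_and_or, not_lt, not_lt] at hnot
    rcases hnot with h | h
    · exact absurd hlt (not_lt.2 h)
    · linarith [hxr.2, hxw.1]
  have key2 : ∀ r w : ℝ × ℝ, r ∈ P → w ∈ P → ∀ x, x ∈ Set.Ioo r.1 r.2 →
      x ∈ Set.Ioo w.1 w.2 → r.2 ≤ w.2 := by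
    intro r w hr hw x hxr hxw
    by_contra hlt
    push_neg at hlt
    have hnot : w.2 ∉ Set.Ioo r.1 r.2 := fun hmem => hw.2.2.2.2.1 (hr.2.2.2.2.2 hmem)
    rw [Set.mem_Ioo, not_and_or, not_lt, not_lt] at hnot
    rcases hnot with h | h
    · linarith [hxr.1, hxw.2]
    · exact absurd hlt (not_lt.2 h)
  have hdisj : P.PairwiseDisjoint (fun p => Set.Ioo p.1 p.2) := by
    intro p hp q hq hpq
    rw [Function.onFun]
    by_contra hcon
    obtain ⟨x, hxp, hxq⟩ := Set.not_disjoint_iff.1 hcon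
    apply hpq
    have e1 : p.1 = q.1 := le_antisymm (key1 q p hq hp x hxq hxp) (key1 p q hp hq x hxp hxq)
    have e2 : p.2 = q.2 := le_antisymm (key2 p q hp hq x hxp hxq) (key2 q p hq hp x hxq hxp)
    exact Prod.ext e1 e2
  have hcount : P.Countable :=
    hdisj.countable_of_isOpen (fun p _ => isOpen_Ioo)
      (fun p hp => Set.nonempty_Ioo.2 hp.2.2.1)
  have hcover : U = ⋃ p ∈ P, Set.Ioo p.1 p.2 := by
    apply Set.Subset.antisymm
    · intro t ht
      obtain ⟨α, β, h1, h2, h3, h4, h5, h6, h7⟩ := hcomp t ht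
      exact Set.mem_biUnion (show (α, β) ∈ P from ⟨h1, h4, lt_trans h2 h3, h5, h6, h7⟩)
        ⟨h2, h3⟩
    · intro t ht
      obtain ⟨p, hp, hmem⟩ := Set.mem_iUnion₂.1 ht
      exact hp.2.2.2.2.2 hmem
  -- per-component estimate
  have hcompInt : ∀ p : ℝ × ℝ, p ∈ P →
      0 ≤ ∫ t in Set.Ioo p.1 p.2, ((deriv F t)^2 - (deriv S t)^2) := by
    rintro ⟨α, β⟩ hp
    obtain ⟨haα, hβb, hαβ, hαU, hβU, hJU⟩ := hp
    simp only at haα hβb hαβ hαU hβU hJU ⊢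
    have hmid : (α + β)/2 ∈ Set.Ioo α β := ⟨by linarith, by linarith⟩
    set c : ℝ := deriv S ((α + β)/2) with hc
    have hnbhd : ∀ v ∈ Set.Ioo α β, ∃ N : Set ℝ, IsOpen N ∧ v ∈ N ∧ N ⊆ Set.Ioo α β ∧
        ∀ w ∈ N, deriv S w = deriv S v := by
      intro v hv
      obtain ⟨δ, hδ, c₀, hder⟩ := hloc v (hJU hv)
      refine ⟨Set.Ioo (v - δ) (v + δ) ∩ Set.Ioo α β, isOpen_Ioo.inter isOpen_Ioo,
        ⟨⟨by linarith, by linarith⟩, hv⟩, Set.inter_subset_right, ?_⟩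
      intro w hw
      rw [(hder w hw.1).deriv, (hder v ⟨by linarith, by linarith⟩).deriv]
    have hconst : ∀ v ∈ Set.Ioo α β, HasDerivAt S c v := by
      have hVopen : IsOpen {v | v ∈ Set.Ioo α β ∧ deriv S v = c} := by
        apply isOpen_iff_forall_mem_open.2
        rintro v ⟨hv, hveq⟩
        obtain ⟨N, hNo, hvN, hNsub, hNeq⟩ := hnbhd v hv
        exact ⟨N, fun w hw => ⟨hNsub hw, by rw [hNeq w hw, hveq]⟩, hNo, hvN⟩
      have hWopen : IsOpen {v | v ∈ Set.Ioo α β ∧ deriv S v ≠ c} := by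
        apply isOpen_iff_forall_mem_open.2
        rintro v ⟨hv, hveq⟩
        obtain ⟨N, hNo, hvN, hNsub, hNeq⟩ := hnbhd v hv
        exact ⟨N, fun w hw => ⟨hNsub hw, by rw [hNeq w hw]; exact hveq⟩, hNo, hvN⟩
      intro v hv
      have hdv : deriv S v = c := by
        by_contra hne
        have hpc := isPreconnected_Ioo (a := α) (b := β)
        have hcover2 : Set.Ioo α β ⊆ {v | v ∈ Set.Ioo α β ∧ deriv S v = c}
            ∪ {v | v ∈ Set.Ioo α β ∧ deriv S v ≠ c} := by
          intro w hw
          by_cases h : deriv S w = c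
          · exact Or.inl ⟨hw, h⟩
          · exact Or.inr ⟨hw, h⟩
        have h1 : (Set.Ioo α β ∩ {v | v ∈ Set.Ioo α β ∧ deriv S v = c}).Nonempty :=
          ⟨(α + β)/2, hmid, hmid, rfl⟩
        have h2 : (Set.Ioo α β ∩ {v | v ∈ Set.Ioo α β ∧ deriv S v ≠ c}).Nonempty :=
          ⟨v, hv, hv, hne⟩
        obtain ⟨w, _, hwV, hwW⟩ := hpc _ _ hVopen hWopen hcover2 h1 h2
        exact hwW.2 hwV.2
      obtain ⟨δ, hδ, c₀, hder⟩ := hloc v (hJU hv)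
      have hmem : v ∈ Set.Ioo (v - δ) (v + δ) := ⟨by linarith, by linarith⟩
      have hc₀ : c₀ = c := by rw [← (hder v hmem).deriv, hdv]
      exact hc₀ ▸ hder v hmem
    have hSder : ∀ v ∈ Set.Ioo α β, deriv S v = c := fun v hv => (hconst v hv).deriv
    have hαβ' : α ≤ β := hαβ.le
    have hSd : S β - S α = c * (β - α) := by
      have h1 : ∫ _ in α..β, c = S β - S α :=
        intervalIntegral.integral_eq_sub_of_hasDeriv_right_of_le hαβ'
          hS.continuous.continuousOn
          (fun x hx => (hconst x hx).hasDerivWithinAt)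
          intervalIntegrable_const
      rw [intervalIntegral.integral_const, smul_eq_mul] at h1
      rw [← h1]; ring
    have hSFα : S α = F α := hcontact α haα (by linarith) hαU
    have hSFβ : S β = F β := hcontact β (by linarith) hβb hβU
    have hFd : ∫ t in Set.Ioo α β, deriv F t = F β - F α := by
      rw [← integral_Ioc_eq_integral_Ioo, ← intervalIntegral.integral_of_le hαβ']
      exact lip_ftc hF hαβ'
    have hmeasJ : MeasurableSet (Set.Ioo α β) := measurableSet_Ioo
    have hfinJ : volume (Set.Ioo α β) < ⊤ := measure_Ioo_lt_top
    have hIF2 := sq_deriv_integrableOn hF hmeasJ hfinJ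
    have hIF1 := deriv_integrableOn hF hmeasJ hfinJ
    have hIconst : IntegrableOn (fun _ => c) (Set.Ioo α β) volume :=
      integrableOn_const hfinJ.ne
    have e1 : ∫ t in Set.Ioo α β, ((deriv F t)^2 - (deriv S t)^2)
        = ∫ t in Set.Ioo α β, ((deriv F t - c)^2 + (2*c) * (deriv F t - c)) := by
      apply setIntegral_congr_fun hmeasJ
      intro t ht
      simp only [hSder t ht]; ring
    have hIsq : IntegrableOn (fun t => (deriv F t - c)^2) (Set.Ioo α β) := by
      have heq : (fun t => (deriv F t - c)^2)
          = fun t => ((deriv F t)^2 - (2*c) * (deriv F t)) + c^2 := by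
        funext t; ring
      rw [heq]
      exact (hIF2.sub (hIF1.const_mul _)).add (integrableOn_const hfinJ.ne)
    have hIlin : IntegrableOn (fun t => (2*c) * (deriv F t - c)) (Set.Ioo α β) :=
      (hIF1.sub hIconst).const_mul _
    have e2 : ∫ t in Set.Ioo α β, (2*c) * (deriv F t - c) = 0 := by
      rw [MeasureTheory.integral_const_mul]
      have : ∫ t in Set.Ioo α β, (deriv F t - c) = 0 := by
        rw [MeasureTheory.integral_sub hIF1 hIconst, hFd, MeasureTheory.setIntegral_const,
          smul_eq_mul, Real.volume_real_Ioo_of_le hαβ']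
        rw [← hSFα, ← hSFβ]
        linarith [hSd]
      rw [this, mul_zero]
    rw [e1, MeasureTheory.integral_add hIsq hIlin, e2, add_zero]
    exact setIntegral_nonneg hmeasJ (fun t _ => sq_nonneg _)
  -- splitting the integral and conclusion
  have hmeasD : MeasurableSet (Set.Ioo a b \ U) := measurableSet_Ioo.diff hUmeas
  have hfinI : volume (Set.Ioo a b) < ⊤ := measure_Ioo_lt_top
  have hintFull : IntegrableOn (fun t => (deriv F t)^2 - (deriv S t)^2) (Set.Ioo a b) :=
    (sq_deriv_integrableOn hF measurableSet_Ioo hfinI).sub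
      (sq_deriv_integrableOn hS measurableSet_Ioo hfinI)
  have hintD : IntegrableOn (fun t => (deriv F t)^2 - (deriv S t)^2) (Set.Ioo a b \ U) volume :=
    hintFull.mono_set Set.diff_subset
  have hintU := hintFull.mono_set hUsub
  have hD0 : ∫ t in (Set.Ioo a b \ U), ((deriv F t)^2 - (deriv S t)^2) = 0 := by
    have hzero : ∫ t in (Set.Ioo a b \ U), ((deriv F t)^2 - (deriv S t)^2)
        = ∫ _ in (Set.Ioo a b \ U), (0:ℝ) := by
      apply setIntegral_congr_ae hmeasD
      filter_upwards [hF.ae_differentiableAt, hS.ae_differentiableAt] with t htF htS htD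
      have htI : t ∈ Set.Ioo a b := htD.1
      have hteq : S t = F t := hcontact t htI.1.le htI.2.le htD.2
      have hmin : IsLocalMin (fun u => F u - S u) t := by
        have hnb : Set.Icc a b ∈ 𝓝 t := Icc_mem_nhds htI.1 htI.2
        have : ∀ᶠ u in 𝓝 t, F t - S t ≤ F u - S u := by
          filter_upwards [hnb] with u hu
          linarith [hle u hu, hteq.le, hteq.ge]
        exact this
      have hd0 := hmin.deriv_eq_zero
      rw [deriv_fun_sub htF htS] at hd0
      have hds : deriv F t = deriv S t := by linarith [hd0]
      rw [hds]; ring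
    rw [hzero, MeasureTheory.integral_zero]
  have hU0 : 0 ≤ ∫ t in U, ((deriv F t)^2 - (deriv S t)^2) := by
    haveI := hcount.to_subtype
    have hcover' : U = ⋃ (p : P), Set.Ioo (p : ℝ × ℝ).1 (p : ℝ × ℝ).2 := by
      rw [hcover]; exact Set.biUnion_eq_iUnion _ _
    have hdisj' : Pairwise (Function.onFun Disjoint
        fun (p : P) => Set.Ioo (p : ℝ × ℝ).1 (p : ℝ × ℝ).2) := by
      intro p q hpq
      exact hdisj p.2 q.2 (fun h => hpq (Subtype.ext h))
    have hintU' : IntegrableOn (fun t => (deriv F t)^2 - (deriv S t)^2)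
        (⋃ (p : P), Set.Ioo (p : ℝ × ℝ).1 (p : ℝ × ℝ).2) := by
      rw [← hcover']; exact hintU
    rw [hcover', MeasureTheory.integral_iUnion (fun p => measurableSet_Ioo) hdisj' hintU']
    exact tsum_nonneg fun p => hcompInt p p.2
  have hsplit : ∫ t in Set.Ioo a b, ((deriv F t)^2 - (deriv S t)^2)
      = (∫ t in (Set.Ioo a b \ U), ((deriv F t)^2 - (deriv S t)^2))
        + ∫ t in U, ((deriv F t)^2 - (deriv S t)^2) := by
    rw [← MeasureTheory.setIntegral_union Set.disjoint_sdiff_left hUmeas hintD hintU,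
      Set.diff_union_of_subset hUsub]
  have hfinal : 0 ≤ ∫ t in Set.Ioo a b, ((deriv F t)^2 - (deriv S t)^2) := by
    rw [hsplit, hD0, zero_add]; exact hU0
  rw [MeasureTheory.integral_sub (sq_deriv_integrableOn hF measurableSet_Ioo hfinI)
    (sq_deriv_integrableOn hS measurableSet_Ioo hfinI)] at hfinal
  linarith [hfinal]

end MainEnergy

open MeasureTheory in
theorem convex_envelope_energy_le (a b : ℝ) (hab : a < b) (f s : ℝ → ℝ) (L : NNReal)
    (hf : LipschitzOnWith L f (Set.Icc a b))
    (hs : ∀ t ∈ Set.Icc a b,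
      s t = sSup {y : ℝ | ∃ g : ℝ → ℝ, ConvexOn ℝ (Set.Icc a b) g ∧
        (∀ u ∈ Set.Icc a b, g u ≤ f u) ∧ y = g t})
    (hsa : s a = f a) (hsb : s b = f b) :
    (∫ t in a..b, (deriv s t) ^ 2) ≤ ∫ t in a..b, (deriv f t) ^ 2 := by
  have hs' : ∀ t ∈ Set.Icc a b, s t = sSup (EnvSet a b f t) := hs
  have hsLip := env_lipschitz hab hf hs' hsa hsb
  have hsf := env_le_f hab hf hs'
  obtain ⟨F, hF, hfF⟩ := hf.extend_real
  obtain ⟨S, hS, hsS⟩ := hsLip.extend_real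
  have haI : a ∈ Set.Icc a b := Set.left_mem_Icc.2 hab.le
  have hbI : b ∈ Set.Icc a b := Set.right_mem_Icc.2 hab.le
  have hderf : ∀ t ∈ Set.Ioo a b, deriv f t = deriv F t := by
    intro t ht
    apply Filter.EventuallyEq.deriv_eq
    filter_upwards [Icc_mem_nhds ht.1 ht.2] with u hu using hfF hu
  have hders : ∀ t ∈ Set.Ioo a b, deriv s t = deriv S t := by
    intro t ht
    apply Filter.EventuallyEq.deriv_eq
    filter_upwards [Icc_mem_nhds ht.1 ht.2] with u hu using hsS hu
  have hmain : ∫ t in Set.Ioo a b, (deriv S t)^2 ≤ ∫ t in Set.Ioo a b, (deriv F t)^2 := by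
    apply main_energy hab hF hS
    · intro t ht
      rw [← hsS ht, ← hfF ht]
      exact hsf t ht
    · rw [← hsS haI, ← hfF haI]; exact hsa
    · rw [← hsS hbI, ← hfF hbI]; exact hsb
    · intro t ht hlt
      rw [← hsS (Set.Ioo_subset_Icc_self ht), ← hfF (Set.Ioo_subset_Icc_self ht)] at hlt
      obtain ⟨δ, hδ, hsub, c, d, haf⟩ := env_locally_affine hab hf hs' hsa hsb ht hlt
      refine ⟨δ, hδ, hsub, c, d, fun u hu => ?_⟩
      rw [← hsS ((hsub.trans Set.Ioo_subset_Icc_self) hu)]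
      exact haf u hu
  have ef : ∫ t in a..b, (deriv f t)^2 = ∫ t in Set.Ioo a b, (deriv F t)^2 := by
    rw [intervalIntegral.integral_of_le hab.le, MeasureTheory.integral_Ioc_eq_integral_Ioo]
    apply setIntegral_congr_fun measurableSet_Ioo
    intro t ht
    simp only [hderf t ht]
  have es : ∫ t in a..b, (deriv s t)^2 = ∫ t in Set.Ioo a b, (deriv S t)^2 := by
    rw [intervalIntegral.integral_of_le hab.le, MeasureTheory.integral_Ioc_eq_integral_Ioo]
    apply setIntegral_congr_fun measurableSet_Ioo
    intro t ht
    simp only [hders t ht]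
  rw [ef, es]
  exact hmain
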